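/- Let a ∈ (0, d), r ∈ (0,1], and ρ ∈ L¹(ℝ^d) ∩ L^{p_a}(ℝ^d) nonnegative with p_a = d/(d−a). Then for every X ∈ ℝ^d, ∫_{|X−x| ≥ r} |X−x|^{−a} ρ(x) dx ≤ C_d (‖ρ‖_{L^{p_a}} + ‖ρ‖_{L¹})(1 + ln(1/r)), where C_d depends only on d. -/

import Mathlib

open intervalIntegral in
theorem myintegral_inv_of_pos {a b : ℝ} (ha : 0 < a) (hb : 0 < b) : ∫ x in a..b, x⁻¹ = Real.log (b / a) := integral_inv_of_pos ha hb

open MeasureTheory Set Metric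

lemma annulus_integral (d : ℕ) (hd : 1 ≤ d) {r : ℝ} (hr : 0 < r) (hr1 : r ≤ 1) :
    ∫ z : EuclideanSpace ℝ (Fin d) in {z | r ≤ ‖z‖ ∧ ‖z‖ ≤ 1}, ‖z‖ ^ (-(d:ℝ)) =
      (d : ℝ) * (volume (ball (0 : EuclideanSpace ℝ (Fin d)) 1)).toReal * Real.log (1/r) := by
  have hdim : Module.finrank ℝ (EuclideanSpace ℝ (Fin d)) = d := finrank_euclideanSpace_fin
  haveI : Nontrivial (EuclideanSpace ℝ (Fin d)) := by
    apply Module.nontrivial_of_finrank_pos (R := ℝ)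
    rw [hdim]; exact hd
  have key := integral_fun_norm_addHaar (volume : Measure (EuclideanSpace ℝ (Fin d)))
      ((Set.Icc r 1).indicator (fun y => y ^ (-(d:ℝ))))
  rw [hdim] at key
  have hset : {z : EuclideanSpace ℝ (Fin d) | r ≤ ‖z‖ ∧ ‖z‖ ≤ 1}
      = (fun z : EuclideanSpace ℝ (Fin d) => ‖z‖) ⁻¹' (Set.Icc r 1) := rfl
  have hmeas : MeasurableSet ((fun z : EuclideanSpace ℝ (Fin d) => ‖z‖) ⁻¹' (Set.Icc r 1)) :=
    measurable_norm measurableSet_Icc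
  have hL : ∫ z : EuclideanSpace ℝ (Fin d) in {z | r ≤ ‖z‖ ∧ ‖z‖ ≤ 1}, ‖z‖ ^ (-(d:ℝ))
      = ∫ x : EuclideanSpace ℝ (Fin d), (Set.Icc r 1).indicator (fun y => y ^ (-(d:ℝ))) ‖x‖ := by
    rw [hset, ← integral_indicator hmeas]
    congr 1
  have hR : ∫ y in Ioi (0:ℝ), y ^ (d-1) • ((Set.Icc r 1).indicator (fun t => t ^ (-(d:ℝ))) y)
      = Real.log (1/r) := by
    have step1 : ∫ y in Ioi (0:ℝ), y ^ (d-1) • ((Set.Icc r 1).indicator (fun t => t ^ (-(d:ℝ))) y)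
        = ∫ y in Ioi (0:ℝ), (Set.Icc r 1).indicator (fun t : ℝ => t⁻¹) y := by
      apply setIntegral_congr_fun measurableSet_Ioi
      intro y hy
      have hy0 : (0:ℝ) < y := hy
      show y ^ (d-1) • ((Set.Icc r 1).indicator (fun t => t ^ (-(d:ℝ))) y)
        = (Set.Icc r 1).indicator (fun t : ℝ => t⁻¹) y
      by_cases h : y ∈ Set.Icc r 1
      · rw [Set.indicator_of_mem h, Set.indicator_of_mem h, smul_eq_mul,
          ← Real.rpow_natCast y (d-1), ← Real.rpow_add hy0, Nat.cast_sub hd, Nat.cast_one,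
          show (d:ℝ) - 1 + -(d:ℝ) = -1 by ring, Real.rpow_neg_one]
      · simp [h]
    have hIcc : Ioi (0:ℝ) ∩ Set.Icc r 1 = Set.Icc r 1 :=
      Set.inter_eq_self_of_subset_right (fun y hy => lt_of_lt_of_le hr hy.1)
    rw [step1, setIntegral_indicator measurableSet_Icc, hIcc,
      MeasureTheory.integral_Icc_eq_integral_Ioc, ← intervalIntegral.integral_of_le hr1,
      myintegral_inv_of_pos hr one_pos]
  rw [hL, key, hR]
  simp only [nsmul_eq_mul, smul_eq_mul, measureReal_def]
  ring

lemma annulus_lintegral (d : ℕ) (hd : 1 ≤ d) {r : ℝ} (hr : 0 < r) (hr1 : r ≤ 1) :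
    ∫⁻ z : EuclideanSpace ℝ (Fin d) in {z | r ≤ ‖z‖ ∧ ‖z‖ ≤ 1},
        ENNReal.ofReal (‖z‖ ^ (-(d:ℝ))) =
      ENNReal.ofReal ((d : ℝ) * (volume (ball (0 : EuclideanSpace ℝ (Fin d)) 1)).toReal
        * Real.log (1/r)) := by
  rw [← annulus_integral d hd hr hr1]
  have hmeas : MeasurableSet {z : EuclideanSpace ℝ (Fin d) | r ≤ ‖z‖ ∧ ‖z‖ ≤ 1} :=
    measurable_norm measurableSet_Icc
  have hsub : {z : EuclideanSpace ℝ (Fin d) | r ≤ ‖z‖ ∧ ‖z‖ ≤ 1} ⊆ closedBall 0 1 := by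
    intro z hz
    simpa [mem_closedBall, dist_zero_right] using hz.2
  have hint : IntegrableOn (fun z : EuclideanSpace ℝ (Fin d) => ‖z‖ ^ (-(d:ℝ)))
      {z | r ≤ ‖z‖ ∧ ‖z‖ ≤ 1} volume := by
    apply Measure.integrableOn_of_bounded (M := r ^ (-(d:ℝ)))
    · exact ((measure_mono hsub).trans_lt measure_closedBall_lt_top).ne
    · exact (measurable_norm.pow measurable_const).aestronglyMeasurable
    · refine (ae_restrict_iff' hmeas).mpr (Filter.Eventually.of_forall fun z hz => ?_)
      rw [Real.norm_eq_abs, abs_of_nonneg (Real.rpow_nonneg (norm_nonneg _) _)]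
      exact Real.rpow_le_rpow_of_nonpos hr hz.1 (by simp)
  rw [← ofReal_integral_eq_lintegral_ofReal hint
      (Filter.Eventually.of_forall fun z => Real.rpow_nonneg (norm_nonneg _) _)]
theorem stmt_10 (d : ℕ) (hd : 1 ≤ d) :
    ∃ C > 0, ∀ a : ℝ, 0 < a → a < d → ∀ r : ℝ, 0 < r → r ≤ 1 →
      ∀ ρ : EuclideanSpace ℝ (Fin d) → ℝ, (∀ x, 0 ≤ ρ x) →
        Integrable ρ →
        MemLp ρ (ENNReal.ofReal ((d : ℝ) / (d - a))) volume →
        ∀ X : EuclideanSpace ℝ (Fin d),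
          ∫ x in {x | r ≤ ‖X - x‖}, ‖X - x‖ ^ (-a) * ρ x ≤
            C * ((eLpNorm ρ (ENNReal.ofReal ((d : ℝ) / (d - a))) volume).toReal
                  + ∫ x, ρ x) * (1 + Real.log (1 / r)) := by
  refine ⟨1 + (d : ℝ) * (volume (ball (0 : EuclideanSpace ℝ (Fin d)) 1)).toReal,
    by positivity, ?_⟩
  intro a ha had r hr hr1 ρ hρ0 hρInt hρLp X
  set ω : ℝ := (volume (ball (0 : EuclideanSpace ℝ (Fin d)) 1)).toReal with hω
  have hω0 : 0 ≤ ω := ENNReal.toReal_nonneg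
  set c : ℝ := (d : ℝ) * ω with hc
  have hc0 : 0 ≤ c := by positivity
  set L : ℝ := Real.log (1 / r) with hLdef
  have hL0 : 0 ≤ L := Real.log_nonneg (by rw [le_div_iff₀ hr]; linarith)
  have hd0 : (0:ℝ) < d := by exact_mod_cast hd
  have hda : (0:ℝ) < (d:ℝ) - a := by linarith
  set p : ℝ := (d:ℝ) / ((d:ℝ) - a) with hpdef
  set q : ℝ := (d:ℝ) / a with hqdef
  have hp0 : 0 < p := by positivity
  have hq0 : 0 < q := by positivity
  have hp1 : 1 < p := by rw [hpdef, lt_div_iff₀ hda]; linarith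
  have hpq : p.HolderConjugate q := by
    rw [Real.holderConjugate_iff]
    constructor
    · exact hp1
    · rw [hpdef, hqdef, inv_div, inv_div]
      field_simp
      ring
  have hnm : Measurable fun x : EuclideanSpace ℝ (Fin d) => ‖X - x‖ :=
    (measurable_const.sub measurable_id).norm
  have hKm : Measurable fun x : EuclideanSpace ℝ (Fin d) => ‖X - x‖ ^ (-a) :=
    hnm.pow measurable_const
  set S : Set (EuclideanSpace ℝ (Fin d)) := {x | r ≤ ‖X - x‖} with hSdef
  set A : Set (EuclideanSpace ℝ (Fin d)) := {x | r ≤ ‖X - x‖ ∧ ‖X - x‖ ≤ 1} with hAdef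
  set B : Set (EuclideanSpace ℝ (Fin d)) := {x | r ≤ ‖X - x‖ ∧ 1 < ‖X - x‖} with hBdef
  have hAm : MeasurableSet A :=
    (measurableSet_le measurable_const hnm).inter (measurableSet_le hnm measurable_const)
  have hBm : MeasurableSet B :=
    (measurableSet_le measurable_const hnm).inter (measurableSet_lt measurable_const hnm)
  set Np : ℝ := (eLpNorm ρ (ENNReal.ofReal p) volume).toReal with hNpdef
  have hNp0 : 0 ≤ Np := ENNReal.toReal_nonneg
  set I1 : ℝ := ∫ x, ρ x with hI1def
  have hI10 : 0 ≤ I1 := integral_nonneg hρ0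
  -- convert to lintegral
  have hnn : 0 ≤ᵐ[volume.restrict S] fun x => ‖X - x‖ ^ (-a) * ρ x :=
    Filter.Eventually.of_forall fun x => mul_nonneg (Real.rpow_nonneg (norm_nonneg _) _) (hρ0 x)
  have hmeasKρ : AEStronglyMeasurable (fun x => ‖X - x‖ ^ (-a) * ρ x) (volume.restrict S) :=
    (hKm.aestronglyMeasurable.mul hρInt.aestronglyMeasurable).restrict
  rw [integral_eq_lintegral_of_nonneg_ae hnn hmeasKρ]
  have hRHS0 : 0 ≤ (1 + c) * (Np + I1) * (1 + L) := by positivity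
  refine ENNReal.toReal_le_of_le_ofReal hRHS0 ?_
  -- split
  have hSsub : S ⊆ A ∪ B := by
    intro x hx
    by_cases h : ‖X - x‖ ≤ 1
    · exact Or.inl ⟨hx, h⟩
    · exact Or.inr ⟨hx, lt_of_not_ge h⟩
  have hsplit : ∫⁻ x in S, ENNReal.ofReal (‖X - x‖ ^ (-a) * ρ x) ≤
      (∫⁻ x in A, ENNReal.ofReal (‖X - x‖ ^ (-a) * ρ x)) +
      ∫⁻ x in B, ENNReal.ofReal (‖X - x‖ ^ (-a) * ρ x) :=
    (lintegral_mono_set hSsub).trans (lintegral_union_le _ _ _)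
  -- B part
  have hBpart : ∫⁻ x in B, ENNReal.ofReal (‖X - x‖ ^ (-a) * ρ x) ≤ ENNReal.ofReal I1 := by
    rw [hI1def, ofReal_integral_eq_lintegral_ofReal hρInt (Filter.Eventually.of_forall hρ0)]
    refine le_trans (lintegral_mono_ae ?_) (setLIntegral_le_lintegral _ _)
    refine (ae_restrict_iff' hBm).mpr (Filter.Eventually.of_forall fun x hx => ?_)
    refine ENNReal.ofReal_le_ofReal ?_
    exact mul_le_of_le_one_left (hρ0 x)
      (Real.rpow_le_one_of_one_le_of_nonpos hx.2.le (neg_nonpos.mpr ha.le))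
  -- A part
  have hApart : ∫⁻ x in A, ENNReal.ofReal (‖X - x‖ ^ (-a) * ρ x) ≤
      ENNReal.ofReal Np * ENNReal.ofReal ((1 + c) * (1 + L)) := by
    have hrw : ∀ x, ENNReal.ofReal (‖X - x‖ ^ (-a) * ρ x)
        = ENNReal.ofReal (ρ x) * ENNReal.ofReal (‖X - x‖ ^ (-a)) := by
      intro x
      rw [mul_comm, ENNReal.ofReal_mul (hρ0 x)]
    have hHolder := ENNReal.lintegral_mul_le_Lp_mul_Lq (volume.restrict A) hpq
      (hρInt.aemeasurable.ennreal_ofReal.restrict)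
      (hKm.ennreal_ofReal.aemeasurable.restrict)
    simp only [Pi.mul_apply] at hHolder
    have step1 : ∫⁻ x in A, ENNReal.ofReal (‖X - x‖ ^ (-a) * ρ x) ≤
        (∫⁻ x in A, ENNReal.ofReal (ρ x) ^ p) ^ (1/p) *
        (∫⁻ x in A, ENNReal.ofReal (‖X - x‖ ^ (-a)) ^ q) ^ (1/q) := by
      calc ∫⁻ x in A, ENNReal.ofReal (‖X - x‖ ^ (-a) * ρ x)
          = ∫⁻ x in A, ENNReal.ofReal (ρ x) * ENNReal.ofReal (‖X - x‖ ^ (-a)) :=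
            lintegral_congr fun x => by rw [hrw x]
        _ ≤ _ := hHolder
    -- ρ factor
    have hρfac : (∫⁻ x in A, ENNReal.ofReal (ρ x) ^ p) ^ (1/p) ≤ ENNReal.ofReal Np := by
      have hne0 : ENNReal.ofReal p ≠ 0 := (ENNReal.ofReal_pos.mpr hp0).ne'
      have hnetop : ENNReal.ofReal p ≠ ⊤ := ENNReal.ofReal_ne_top
      have heq : eLpNorm ρ (ENNReal.ofReal p) volume
          = (∫⁻ x, ENNReal.ofReal (ρ x) ^ p) ^ (1/p) := by
        rw [eLpNorm_eq_lintegral_rpow_enorm_toReal hne0 hnetop, ENNReal.toReal_ofReal hp0.le]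
        congr 1
        exact lintegral_congr fun x => by rw [← Real.enorm_eq_ofReal (hρ0 x)]
      rw [hNpdef, ENNReal.ofReal_toReal hρLp.eLpNorm_ne_top, heq]
      exact ENNReal.rpow_le_rpow (setLIntegral_le_lintegral _ _) (by positivity)
    -- kernel factor
    have hKfac : (∫⁻ x in A, ENNReal.ofReal (‖X - x‖ ^ (-a)) ^ q) ^ (1/q) ≤
        ENNReal.ofReal ((1 + c) * (1 + L)) := by
      have hKq : ∀ x : EuclideanSpace ℝ (Fin d),
          ENNReal.ofReal (‖X - x‖ ^ (-a)) ^ q = ENNReal.ofReal (‖X - x‖ ^ (-(d:ℝ))) := by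
        intro x
        rw [ENNReal.ofReal_rpow_of_nonneg (Real.rpow_nonneg (norm_nonneg _) _) hq0.le,
          ← Real.rpow_mul (norm_nonneg _)]
        congr 2
        rw [hqdef]
        field_simp
      have hannm : MeasurableSet {z : EuclideanSpace ℝ (Fin d) | r ≤ ‖z‖ ∧ ‖z‖ ≤ 1} :=
        (measurableSet_le measurable_const measurable_norm).inter
          (measurableSet_le measurable_norm measurable_const)
      have hmap : ∫⁻ x in A, ENNReal.ofReal (‖X - x‖ ^ (-(d:ℝ))) =
          ∫⁻ z in {z : EuclideanSpace ℝ (Fin d) | r ≤ ‖z‖ ∧ ‖z‖ ≤ 1},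
            ENNReal.ofReal (‖z‖ ^ (-(d:ℝ))) := by
        have hpre : A = (fun x : EuclideanSpace ℝ (Fin d) => X - x) ⁻¹'
            {z | r ≤ ‖z‖ ∧ ‖z‖ ≤ 1} := rfl
        rw [hpre]
        exact (Measure.measurePreserving_sub_left volume X).setLIntegral_comp_preimage hannm
          ((measurable_norm.pow measurable_const).ennreal_ofReal)
      have hval : ∫⁻ x in A, ENNReal.ofReal (‖X - x‖ ^ (-(d:ℝ))) = ENNReal.ofReal (c * L) := by
        rw [hmap, annulus_lintegral d hd hr hr1, hc, hLdef, mul_assoc]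
      have hq11 : 1/q ≤ 1 := by
        rw [hqdef, one_div_div, div_le_one hd0]
        linarith
      have hq10 : 0 ≤ 1/q := by positivity
      calc (∫⁻ x in A, ENNReal.ofReal (‖X - x‖ ^ (-a)) ^ q) ^ (1/q)
          = (ENNReal.ofReal (c * L)) ^ (1/q) := by
            rw [← hval]; congr 1; exact lintegral_congr fun x => hKq x
        _ = ENNReal.ofReal ((c * L) ^ (1/q)) :=
            ENNReal.ofReal_rpow_of_nonneg (by positivity) hq10
        _ ≤ ENNReal.ofReal ((1 + c) * (1 + L)) := by
            refine ENNReal.ofReal_le_ofReal ?_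
            have hcl0 : 0 ≤ c * L := by positivity
            have hbound : (c * L) ^ (1/q) ≤ 1 + c * L := by
              rcases le_total (c * L) 1 with h | h
              · calc (c * L) ^ (1/q) ≤ 1 := Real.rpow_le_one hcl0 h hq10
                  _ ≤ 1 + c * L := by linarith
              · calc (c * L) ^ (1/q) ≤ (c * L) ^ (1:ℝ) :=
                    Real.rpow_le_rpow_of_exponent_le h hq11
                  _ = c * L := Real.rpow_one _
                  _ ≤ 1 + c * L := by linarith
            nlinarith
    calc ∫⁻ x in A, ENNReal.ofReal (‖X - x‖ ^ (-a) * ρ x)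
        ≤ (∫⁻ x in A, ENNReal.ofReal (ρ x) ^ p) ^ (1/p) *
          (∫⁻ x in A, ENNReal.ofReal (‖X - x‖ ^ (-a)) ^ q) ^ (1/q) := step1
      _ ≤ ENNReal.ofReal Np * ENNReal.ofReal ((1 + c) * (1 + L)) := mul_le_mul' hρfac hKfac
  -- combine
  calc ∫⁻ x in S, ENNReal.ofReal (‖X - x‖ ^ (-a) * ρ x)
      ≤ ENNReal.ofReal Np * ENNReal.ofReal ((1 + c) * (1 + L)) + ENNReal.ofReal I1 :=
        hsplit.trans (add_le_add hApart hBpart)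
    _ = ENNReal.ofReal (Np * ((1 + c) * (1 + L)) + I1) := by
        rw [← ENNReal.ofReal_mul hNp0, ← ENNReal.ofReal_add (by positivity) hI10]
    _ ≤ ENNReal.ofReal ((1 + c) * (Np + I1) * (1 + L)) := by
        refine ENNReal.ofReal_le_ofReal ?_
        nlinarith [mul_nonneg hI10 hc0, mul_nonneg hI10 hL0,
          mul_nonneg (mul_nonneg hI10 hc0) hL0]
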